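/- Fix an integer n ≥ 1 and q ∈ (−1,1]. For all f, g ∈ L²(ℝ₊ⁿ), one has Σ_{π∈C₂(n⊗n)} q^{Cr(π)} ∫_π f ⊗ g = ⟨f, g*⟩_q. -/

import Mathlib

open MeasureTheory

noncomputable section

/-- Lebesgue measure restricted to `ℝ₊ = [0,∞)`. -/
def mR : Measure ℝ := volume.restrict (Set.Ici (0 : ℝ))

/-- Lebesgue measure on `ℝ₊ⁿ`. -/
def μn (n : ℕ) : Measure (Fin n → ℝ) := Measure.pi fun _ => mR

/-- Number of inversions of a map `σ : Fin p → Fin m`: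
`inv(σ) = Card {i < j : σ i > σ j}`. -/
def invCount {p m : ℕ} (σ : Fin p → Fin m) : ℕ :=
  (Finset.univ.filter fun ij : Fin p × Fin p => ij.1 < ij.2 ∧ σ ij.2 < σ ij.1).card

/-- The `q`-inner product
`⟨f,g⟩_q = Σ_{σ ∈ S_n} q^{inv σ} ∫ f(t_{σ(1)},…,t_{σ(n)}) g(t₁,…,t_n) dt`. -/
def qInner (n : ℕ) (q : ℝ) (f g : (Fin n → ℝ) → ℝ) : ℝ :=
  ∑ σ : Equiv.Perm (Fin n),
    q ^ invCount (fun i => σ i) * ∫ t, f (fun i => t (σ i)) * g t ∂ μn n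

/-- `f*`, the mirror of `f` : `f*(t₁,…,tₙ) = f(tₙ,…,t₁)`. -/
def mirror {n : ℕ} (f : (Fin n → ℝ) → ℝ) : (Fin n → ℝ) → ℝ := fun t => f fun i => t i.rev

/-- The pairing integral `∫_{P₂(σ)} F ⊗ H` associated with the pairing
`P₂(σ) = {{N+1-i, N+σ(i)} : 1 ≤ i ≤ N}` of `{1,…,2N}`, namely
`∫ F(s₁,…,s_N) H(s_{N+1-σ⁻¹(1)},…,s_{N+1-σ⁻¹(N)}) ds`. -/
def P2Integral (N : ℕ) (σ : Equiv.Perm (Fin N)) (F H : (Fin N → ℝ) → ℝ) : ℝ :=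
  ∫ s, F s * H (fun i => s (σ.symm i).rev) ∂ μn N

/-- `f` is symmetric: for every permutation `σ`, `f(t_{σ(1)},…,t_{σ(n)}) = f(t₁,…,tₙ)`
for almost every `t`. -/
def SymmFn {n : ℕ} (f : (Fin n → ℝ) → ℝ) : Prop :=
  ∀ σ : Equiv.Perm (Fin n), ∀ᵐ t ∂ μn n, f (fun i => t (σ i)) = f t

/-- Safe coordinate access: `gv t k = t k` when `k < m`, and `0` otherwise. -/
def gv {m : ℕ} (t : Fin m → ℝ) (k : ℕ) : ℝ := if h : k < m then t ⟨k, h⟩ else 0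

/-- The `p`-th contraction `f ⌢_p g`:
`(f ⌢_p g)(t₁,…,t_{n+m-2p}) = ∫ f(t₁,…,t_{n-p},s_p,…,s₁) g(s₁,…,s_p,t_{n-p+1},…,t_{n+m-2p}) ds`. -/
def contr (n m p : ℕ) (f : (Fin n → ℝ) → ℝ) (g : (Fin m → ℝ) → ℝ) :
    (Fin (n + m - 2 * p) → ℝ) → ℝ :=
  fun t => ∫ s : Fin p → ℝ,
      f (fun i => if (i : ℕ) < n - p then gv t i else gv s (n - 1 - (i : ℕ))) *
      g (fun j => if (j : ℕ) < p then gv s j else gv t (n - p + ((j : ℕ) - p))) ∂ μn p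

/-- `α(σ)` for a (strictly decreasing, 0-indexed) `σ : Fin p → Fin n`;
in 1-indexed terms `α(σ) = Σᵢ (n+1-σ(i)) - p(p+1)/2`. -/
def alphaA (n p : ℕ) (σ : Fin p → Fin n) : ℕ := (∑ i, (n - (σ i : ℕ))) - p * (p + 1) / 2

/-- `β(σ)` for an (injective, 0-indexed) `σ : Fin p → Fin n`;
in 1-indexed terms `β(σ) = Σᵢ σ(i) - p(p+1)/2 + inv(σ)`. -/
def betaB (n p : ℕ) (σ : Fin p → Fin n) : ℕ :=
  ((∑ i, (σ i : ℕ)) - p * (p - 1) / 2) + invCount σ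

/-- `f_q^{(p)}`, as a function of `(t₁,…,t_{n-p},s_p,…,s₁)`:
`Σ_{σ : {1,…,p} → {1,…,n} strictly decreasing} q^{α(σ)} f(x₁,…,xₙ)` where `x_{σ(i)} = s_i`
and the remaining coordinates, read increasingly, are `t₁,…,t_{n-p}`. -/
def qexpDec (n p : ℕ) (q : ℝ) (f : (Fin n → ℝ) → ℝ) : (Fin n → ℝ) → ℝ :=
  fun u => ∑ σ ∈ Finset.univ.filter (fun σ : Fin p → Fin n => ∀ i j : Fin p, i < j → σ j < σ i),
    q ^ alphaA n p σ * f (fun j =>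
      if ∃ i, σ i = j then
        ∑ i ∈ Finset.univ.filter (fun i => σ i = j), gv u (n - 1 - (i : ℕ))
      else gv u ((Finset.univ.filter fun j' : Fin n => j' < j ∧ ∀ i, σ i ≠ j').card))

/-- `f_q^{[p]}`, as a function of `(s₁,…,s_p,t₁,…,t_{n-p})`:
`Σ_{σ : {1,…,p} → {1,…,n} injective} q^{β(σ)} f(x₁,…,xₙ)` where `x_{σ(i)} = s_i`
and the remaining coordinates, read increasingly, are `t₁,…,t_{n-p}`. -/
def qexpInj (n p : ℕ) (q : ℝ) (f : (Fin n → ℝ) → ℝ) : (Fin n → ℝ) → ℝ :=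
  fun u => ∑ σ ∈ Finset.univ.filter (fun σ : Fin p → Fin n => Function.Injective σ),
    q ^ betaB n p σ * f (fun j =>
      if ∃ i, σ i = j then
        ∑ i ∈ Finset.univ.filter (fun i => σ i = j), gv u (i : ℕ)
      else gv u (p + (Finset.univ.filter fun j' : Fin n => j' < j ∧ ∀ i, σ i ≠ j').card))

/-- The `q`-contraction `f ⊗_q^p g := f_q^{(p)} ⌢_p g_q^{[p]}`. -/
def qcontr (n m p : ℕ) (q : ℝ) (f : (Fin n → ℝ) → ℝ) (g : (Fin m → ℝ) → ℝ) :
    (Fin (n + m - 2 * p) → ℝ) → ℝ :=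
  contr n m p (qexpDec n p q f) (qexpInj m p q g)

/-- Two (2-element) sets form a crossing: `{x₁,y₁}, {x₂,y₂}` with `x₁ < x₂ < y₁ < y₂`. -/
def Crossing (p₁ p₂ : Finset ℕ) : Prop :=
  ∃ x₁ ∈ p₁, ∃ y₁ ∈ p₁, ∃ x₂ ∈ p₂, ∃ y₂ ∈ p₂, x₁ < x₂ ∧ x₂ < y₁ ∧ y₁ < y₂

/-- The number of crossings `Cr(π)` of a pairing `π` (each crossing counted once:
the pair containing the smallest point is listed first). -/
def crNum (π : Finset (Finset ℕ)) : ℕ := by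
  classical exact ((π ×ˢ π).filter fun pp => Crossing pp.1 pp.2).card

/-- `π` is a pairing of `{0,…,N-1}`: a partition of it into 2-element sets. -/
def IsPairingOn (N : ℕ) (π : Finset (Finset ℕ)) : Prop :=
  (∀ pr ∈ π, pr.card = 2 ∧ pr ⊆ Finset.range N) ∧ ∀ x < N, ∃! pr, pr ∈ π ∧ x ∈ pr

/-- `off n i = n₁ + … + nᵢ`, the offset of the `(i+1)`-th block. -/
def off (n : ℕ → ℕ) (i : ℕ) : ℕ := ∑ j ∈ Finset.range i, n j

/-- `π ∈ C₂(n₁ ⊗ … ⊗ n_r)`: `π` is a pairing of the ground set partitioned into the `r`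
consecutive blocks of sizes `n 0, …, n (r-1)`, and every pair of `π` meets two distinct
blocks (no pair is contained in a single block). -/
def Respects (r : ℕ) (n : ℕ → ℕ) (π : Finset (Finset ℕ)) : Prop :=
  IsPairingOn (off n r) π ∧
    ∀ pr ∈ π, ¬ ∃ i < r, ∀ x ∈ pr, off n i ≤ x ∧ x < off n (i + 1)

/-- The (finite) set `C₂(n₁ ⊗ … ⊗ n_r)` of all respecting pairings. -/
def respPairings (r : ℕ) (n : ℕ → ℕ) : Finset (Finset (Finset ℕ)) := by
  classical exact ((Finset.range (off n r)).powerset.powerset).filter fun π => Respects r n π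

/-- The pairing integral `∫_π F`: one integration variable per pair of `π`, the two
coordinates of each pair being set equal to that variable, integrated over `ℝ₊^{N/2}`. -/
def pairingIntegral (π : Finset (Finset ℕ)) (F : (ℕ → ℝ) → ℝ) : ℝ :=
  ∫ u : {pr // pr ∈ π} → ℝ,
    F (fun x => ∑ pr ∈ Finset.univ.filter (fun pr : {pr // pr ∈ π} => x ∈ pr.1), u pr)
    ∂ Measure.pi fun _ => mR

/-- The product `f₁(t₁,…,t_{n₁}) f₂(t_{n₁+1},…,t_{n₁+n₂}) ⋯ f_r(…,t_n)` as a function of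
`t : ℕ → ℝ` (blocks of sizes `n 0, …, n (r-1)`). -/
def prodBlocks (r : ℕ) (n : ℕ → ℕ) (f : ∀ i, (Fin (n i) → ℝ) → ℝ) : (ℕ → ℝ) → ℝ :=
  fun t => ∏ i ∈ Finset.range r, f i (fun j => t (off n i + (j : ℕ)))

/-- `P₂(σ) = {{n+1-i, n+σ(i)} : 1 ≤ i ≤ n}` as a pairing of `{0,…,2n-1}` (0-indexed). -/
def P2set (n : ℕ) (σ : Equiv.Perm (Fin n)) : Finset (Finset ℕ) :=
  Finset.univ.image fun i : Fin n => ({n - 1 - (i : ℕ), n + ((σ i : Fin n) : ℕ)} : Finset ℕ)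

/-- The map `φ` in the construction of `F(σ₁,σ₂,π')`: the unpaired points of the first two
blocks are mapped increasingly onto `{0,…,n₀+n₁-2p-1}` and every later point `x` is mapped
to `x - 2p`. -/
def phiF (n₀ n₁ p : ℕ) (σ₁ : Fin p → Fin n₀) (σ₂ : Fin p → Fin n₁) (x : ℕ) : ℕ :=
  if x < n₀ + n₁ then
    ((Finset.range x).filter fun y =>
      (∀ i, ((σ₁ i : ℕ)) ≠ y) ∧ (∀ i, n₀ + (σ₂ i : ℕ) ≠ y)).card
  else x - 2 * p

/-- The pairing `F(σ₁,σ₂,π')` of the ground set `{0,…,N-1}`: it contains the `p` pairs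
`{σ₁(i), n₀+σ₂(i)}`, and its remaining pairs are exactly the `φ`-preimages of the pairs
of `π'`. -/
def Fpair (N n₀ n₁ p : ℕ) (σ₁ : Fin p → Fin n₀) (σ₂ : Fin p → Fin n₁)
    (π' : Finset (Finset ℕ)) : Finset (Finset ℕ) :=
  (Finset.univ.image fun i : Fin p => ({(σ₁ i : ℕ), n₀ + (σ₂ i : ℕ)} : Finset ℕ)) ∪
  π'.image fun pr => (Finset.range N).filter fun x =>
    (x < n₀ + n₁ → (∀ i, (σ₁ i : ℕ) ≠ x) ∧ (∀ i, n₀ + (σ₂ i : ℕ) ≠ x)) ∧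
    phiF n₀ n₁ p σ₁ σ₂ x ∈ pr

/-- Block sizes `(n₁+n₂-2p, n₃, …, n_r)` after contracting the first two blocks. -/
def contractedSizes (n : ℕ → ℕ) (p : ℕ) : ℕ → ℕ
  | 0 => n 0 + n 1 - 2 * p
  | k + 1 => n (k + 2)

/-- Kernels `(f₁ ⊗_q^p f₂, f₃, …, f_r)` after contracting the first two kernels. -/
def contractedKernels (n : ℕ → ℕ) (p : ℕ) (q : ℝ) (f : ∀ i, (Fin (n i) → ℝ) → ℝ) :
    ∀ j, (Fin (contractedSizes n p j) → ℝ) → ℝ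
  | 0 => qcontr (n 0) (n 1) p q (f 0) (f 1)
  | k + 1 => f (k + 2)

end
noncomputable section Aux

open Finset

instance : SigmaFinite mR := by unfold mR; infer_instance

variable {n : ℕ}

/-- The pairing associated with a permutation: `{{i, n+τ(i)} : i}` (0-indexed). -/
def pairOf (n : ℕ) (τ : Equiv.Perm (Fin n)) : Finset (Finset ℕ) :=
  Finset.univ.image fun i : Fin n => ({(i : ℕ), n + (τ i : ℕ)} : Finset ℕ)

lemma mem_pairOf {τ : Equiv.Perm (Fin n)} {pr : Finset ℕ} :
    pr ∈ pairOf n τ ↔ ∃ i : Fin n, pr = {(i : ℕ), n + (τ i : ℕ)} := by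
  simp [pairOf, eq_comm]

lemma pair_inj {i j a b : Fin n}
    (h : ({(i : ℕ), n + (a : ℕ)} : Finset ℕ) = {(j : ℕ), n + (b : ℕ)}) :
    i = j ∧ a = b := by
  have hi : (i : ℕ) = j ∨ (i : ℕ) = n + b := by
    have : (i : ℕ) ∈ ({(j : ℕ), n + (b : ℕ)} : Finset ℕ) := by
      rw [← h]; simp
    simpa using this
  have ha : n + (a : ℕ) = j ∨ n + (a : ℕ) = n + b := by
    have : (n + (a : ℕ)) ∈ ({(j : ℕ), n + (b : ℕ)} : Finset ℕ) := by
      rw [← h]; simp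
    simpa using this
  have h1 := i.isLt; have h2 := j.isLt; have h3 := a.isLt; have h4 := b.isLt
  exact ⟨Fin.ext (by omega), Fin.ext (by omega)⟩

lemma off0 : off (fun _ => n) 0 = 0 := by simp [off]
lemma off1 : off (fun _ => n) 1 = n := by simp [off]
lemma off2 : off (fun _ => n) 2 = 2 * n := by
  simp [off, Finset.sum_range_succ, two_mul]

lemma mem_respPairings_iff {π : Finset (Finset ℕ)} :
    π ∈ respPairings 2 (fun _ => n) ↔ Respects 2 (fun _ => n) π := by
  classical
  constructor
  · intro h; exact (Finset.mem_filter.mp h).2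
  · intro h
    refine Finset.mem_filter.mpr ⟨?_, h⟩
    rw [Finset.mem_powerset]
    intro pr hpr
    rw [Finset.mem_powerset]
    exact (h.1.1 pr hpr).2

lemma pairOf_mem (τ : Equiv.Perm (Fin n)) : pairOf n τ ∈ respPairings 2 (fun _ => n) := by
  rw [mem_respPairings_iff]
  refine ⟨⟨?_, ?_⟩, ?_⟩
  · intro pr hpr
    obtain ⟨i, rfl⟩ := mem_pairOf.mp hpr
    have h1 := i.isLt; have h2 := (τ i).isLt
    constructor
    · rw [Finset.card_pair (by omega)]
    · intro x hx
      simp only [Finset.mem_insert, Finset.mem_singleton] at hx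
      rw [Finset.mem_range, off2]; omega
  · intro x hx
    rw [off2] at hx
    by_cases hxn : x < n
    · refine ⟨{((⟨x, hxn⟩ : Fin n) : ℕ), n + ((τ ⟨x, hxn⟩ : Fin n) : ℕ)},
        ⟨mem_pairOf.mpr ⟨⟨x, hxn⟩, rfl⟩, by simp⟩, ?_⟩
      rintro pr ⟨hpr, hxpr⟩
      obtain ⟨j, rfl⟩ := mem_pairOf.mp hpr
      have h2 := (τ j).isLt
      simp only [Finset.mem_insert, Finset.mem_singleton] at hxpr
      have hj : (j : ℕ) = x := by omega
      have : j = (⟨x, hxn⟩ : Fin n) := Fin.ext hj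
      rw [this]
    · set k : Fin n := ⟨x - n, by omega⟩ with hk
      refine ⟨{((τ.symm k : Fin n) : ℕ), n + (τ (τ.symm k) : ℕ)},
        ⟨mem_pairOf.mpr ⟨τ.symm k, rfl⟩, ?_⟩, ?_⟩
      · have : τ (τ.symm k) = k := τ.apply_symm_apply k
        rw [this]
        simp only [Finset.mem_insert, Finset.mem_singleton, hk]
        omega
      · rintro pr ⟨hpr, hxpr⟩
        obtain ⟨j, rfl⟩ := mem_pairOf.mp hpr
        have h1 := j.isLt
        simp only [Finset.mem_insert, Finset.mem_singleton] at hxpr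
        have htj : (τ j : ℕ) = x - n := by omega
        have hjk : τ j = k := Fin.ext htj
        have : j = τ.symm k := by rw [← hjk, Equiv.symm_apply_apply]
        rw [this]
  · rintro pr hpr ⟨b, hb, hall⟩
    obtain ⟨i, rfl⟩ := mem_pairOf.mp hpr
    have h1 := i.isLt; have h2 := (τ i).isLt
    have ha := hall (i : ℕ) (by simp)
    have hbb := hall (n + (τ i : ℕ)) (by simp)
    interval_cases b
    · rw [off0, off1] at ha hbb; omega
    · rw [off1, off2] at ha hbb; omega

lemma resp_eq_pairOf {π : Finset (Finset ℕ)} (hπ : π ∈ respPairings 2 (fun _ => n)) :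
    ∃ τ : Equiv.Perm (Fin n), π = pairOf n τ := by
  classical
  obtain ⟨⟨hcard, huniq⟩, hblock⟩ := mem_respPairings_iff.mp hπ
  have huniq' : ∀ x < 2 * n, ∃! pr, pr ∈ π ∧ x ∈ pr := by
    intro x hx; exact huniq x (by rw [off2]; omega)
  have hstruct : ∀ pr ∈ π, ∃ a b : Fin n, pr = {(a : ℕ), n + (b : ℕ)} := by
    intro pr hpr
    obtain ⟨hc2, hsub⟩ := hcard pr hpr
    obtain ⟨x, y, hxy, rfl⟩ := Finset.card_eq_two.mp hc2
    have hx2 : x < 2 * n := by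
      have := hsub (Finset.mem_insert_self x {y})
      rw [Finset.mem_range, off2] at this; exact this
    have hy2 : y < 2 * n := by
      have := hsub (by simp : y ∈ ({x, y} : Finset ℕ))
      rw [Finset.mem_range, off2] at this; exact this
    have hb := hblock _ hpr
    have hnotlo : ¬ (x < n ∧ y < n) := by
      rintro ⟨hx, hy⟩
      refine hb ⟨0, by norm_num, ?_⟩
      intro z hz
      simp only [Finset.mem_insert, Finset.mem_singleton] at hz
      have e0 : off (fun _ => n) 0 = 0 := off0
      have e1 : off (fun _ => n) (0 + 1) = n := off1
      rw [e0, e1]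
      rcases hz with rfl | rfl
      · exact ⟨Nat.zero_le _, hx⟩
      · exact ⟨Nat.zero_le _, hy⟩
    have hnothi : ¬ (n ≤ x ∧ n ≤ y) := by
      rintro ⟨hx, hy⟩
      refine hb ⟨1, by norm_num, ?_⟩
      intro z hz
      simp only [Finset.mem_insert, Finset.mem_singleton] at hz
      have e1 : off (fun _ => n) 1 = n := off1
      have e2 : off (fun _ => n) (1 + 1) = 2 * n := off2
      rw [e1, e2]
      rcases hz with rfl | rfl
      · exact ⟨hx, hx2⟩
      · exact ⟨hy, hy2⟩
    by_cases hx : x < n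
    · have hy : n ≤ y := by omega
      refine ⟨⟨x, hx⟩, ⟨y - n, by omega⟩, ?_⟩
      show ({x, y} : Finset ℕ) = {x, n + (y - n)}
      rw [show n + (y - n) = y from by omega]
    · have hy : y < n := by omega
      have hx' : n ≤ x := by omega
      refine ⟨⟨y, hy⟩, ⟨x - n, by omega⟩, ?_⟩
      show ({x, y} : Finset ℕ) = {y, n + (x - n)}
      rw [show n + (x - n) = x from by omega, Finset.pair_comm]
  have hD : ∀ i : Fin n, ∃ b : Fin n, ({(i : ℕ), n + (b : ℕ)} : Finset ℕ) ∈ π := by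
    intro i
    obtain ⟨pr, ⟨hpr, hipr⟩, -⟩ := huniq' (i : ℕ) (by have := i.isLt; omega)
    obtain ⟨a, b, rfl⟩ := hstruct pr hpr
    have hb' := b.isLt; have hi' := i.isLt
    simp only [Finset.mem_insert, Finset.mem_singleton] at hipr
    have : (i : ℕ) = (a : ℕ) := by omega
    refine ⟨b, ?_⟩
    rw [this]; exact hpr
  choose D hDmem using hD
  have hDinj : Function.Injective D := by
    intro i j hij
    have h1 := hDmem i
    have h2 := hDmem j
    rw [hij] at h1
    obtain ⟨pr, -, hun⟩ := huniq' (n + (D j : ℕ)) (by have := (D j).isLt; omega)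
    have e1 := hun _ ⟨h1, by simp⟩
    have e2 := hun _ ⟨h2, by simp⟩
    exact (pair_inj (e1.trans e2.symm)).1
  refine ⟨Equiv.ofBijective D (Finite.injective_iff_bijective.mp hDinj), ?_⟩
  apply Finset.Subset.antisymm
  · intro pr hpr
    obtain ⟨a, b, rfl⟩ := hstruct pr hpr
    obtain ⟨pr', -, hun⟩ := huniq' (a : ℕ) (by have := a.isLt; omega)
    have e1 := hun _ ⟨hpr, by simp⟩
    have e2 := hun _ ⟨hDmem a, by simp⟩
    rw [mem_pairOf]
    exact ⟨a, e1.trans e2.symm⟩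
  · intro pr hpr
    obtain ⟨i, rfl⟩ := mem_pairOf.mp hpr
    exact hDmem i

lemma pairOf_injective : Function.Injective (pairOf n) := by
  intro τ τ' h
  apply Equiv.ext
  intro i
  have hmem : ({(i : ℕ), n + (τ i : ℕ)} : Finset ℕ) ∈ pairOf n τ' := by
    rw [← h, mem_pairOf]; exact ⟨i, rfl⟩
  obtain ⟨j, hj⟩ := mem_pairOf.mp hmem
  obtain ⟨rfl, hb⟩ := pair_inj hj
  exact hb

lemma respPairings_eq :
    respPairings 2 (fun _ => n) = Finset.image (pairOf n) Finset.univ := by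
  ext π
  simp only [Finset.mem_image, Finset.mem_univ, true_and]
  constructor
  · intro h; obtain ⟨τ, rfl⟩ := resp_eq_pairOf h; exact ⟨τ, rfl⟩
  · rintro ⟨τ, rfl⟩; exact pairOf_mem τ


lemma crossing_iff (τ : Equiv.Perm (Fin n)) (i j : Fin n) :
    Crossing {(i : ℕ), n + (τ i : ℕ)} {(j : ℕ), n + (τ j : ℕ)} ↔
      (i : ℕ) < j ∧ (τ i : ℕ) < τ j := by
  have hi := i.isLt; have hj := j.isLt; have hti := (τ i).isLt; have htj := (τ j).isLt
  constructor
  · rintro ⟨x₁, hx₁, y₁, hy₁, x₂, hx₂, y₂, hy₂, h1, h2, h3⟩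
    simp only [Finset.mem_insert, Finset.mem_singleton] at hx₁ hy₁ hx₂ hy₂
    omega
  · rintro ⟨h1, h2⟩
    exact ⟨i, by simp, n + (τ i : ℕ), by simp, j, by simp, n + (τ j : ℕ), by simp,
      h1, by omega, by omega⟩

lemma crNum_pairOf (τ : Equiv.Perm (Fin n)) :
    crNum (pairOf n τ) =
      (Finset.univ.filter fun ij : Fin n × Fin n => ij.1 < ij.2 ∧ τ ij.1 < τ ij.2).card := by
  classical
  unfold crNum
  rw [eq_comm]
  refine Finset.card_bij
    (fun ij _ => (({(ij.1 : ℕ), n + (τ ij.1 : ℕ)} : Finset ℕ),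
      ({(ij.2 : ℕ), n + (τ ij.2 : ℕ)} : Finset ℕ))) ?_ ?_ ?_
  · intro ij hij
    simp only [Finset.mem_filter, Finset.mem_univ, true_and] at hij
    refine Finset.mem_filter.mpr ⟨Finset.mem_product.mpr ⟨?_, ?_⟩, ?_⟩
    · exact mem_pairOf.mpr ⟨ij.1, rfl⟩
    · exact mem_pairOf.mpr ⟨ij.2, rfl⟩
    · exact (crossing_iff τ ij.1 ij.2).mpr ⟨hij.1, hij.2⟩
  · intro a _ b _ hab
    obtain ⟨h1, h2⟩ := Prod.mk.injEq _ _ _ _ ▸ hab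
    have e1 := (pair_inj h1).1
    have e2 := (pair_inj h2).1
    exact Prod.ext e1 e2
  · intro b hb
    obtain ⟨hmem, hcr⟩ := Finset.mem_filter.mp hb
    obtain ⟨hb1, hb2⟩ := Finset.mem_product.mp hmem
    obtain ⟨i, hi⟩ := mem_pairOf.mp hb1
    obtain ⟨j, hj⟩ := mem_pairOf.mp hb2
    rw [hi, hj] at hcr
    have hc := (crossing_iff τ i j).mp hcr
    refine ⟨(i, j), ?_, ?_⟩
    · simp only [Finset.mem_filter, Finset.mem_univ, true_and]
      exact ⟨hc.1, hc.2⟩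
    · simp only []
      rw [Prod.ext_iff]
      exact ⟨hi.symm, hj.symm⟩


/-- The canonical bijection `Fin n ≃ pairs of pairOf n τ`. -/
def pairEquiv (τ : Equiv.Perm (Fin n)) : Fin n ≃ {pr // pr ∈ pairOf n τ} :=
  Equiv.ofBijective
    (fun i => ⟨{(i : ℕ), n + (τ i : ℕ)}, mem_pairOf.mpr ⟨i, rfl⟩⟩)
    ⟨fun i j h => (pair_inj (congrArg Subtype.val h)).1, by
      rintro ⟨pr, hpr⟩
      obtain ⟨i, rfl⟩ := mem_pairOf.mp hpr
      exact ⟨i, rfl⟩⟩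

lemma filter_lo (τ : Equiv.Perm (Fin n)) (i : Fin n) :
    (Finset.univ.filter fun pr : {pr // pr ∈ pairOf n τ} => ((i : ℕ) ∈ pr.1)) =
      {pairEquiv τ i} := by
  ext pr
  simp only [Finset.mem_filter, Finset.mem_univ, true_and, Finset.mem_singleton]
  constructor
  · intro h
    obtain ⟨j, hj⟩ := mem_pairOf.mp pr.2
    rw [hj] at h
    simp only [Finset.mem_insert, Finset.mem_singleton] at h
    have hi := i.isLt; have htj := (τ j).isLt
    have hij : i = j := Fin.ext (by omega)
    subst hij
    exact Subtype.ext hj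
  · rintro rfl
    show (i : ℕ) ∈ ({(i : ℕ), n + (τ i : ℕ)} : Finset ℕ)
    simp

lemma filter_hi (τ : Equiv.Perm (Fin n)) (k : Fin n) :
    (Finset.univ.filter fun pr : {pr // pr ∈ pairOf n τ} => ((n + (k : ℕ)) ∈ pr.1)) =
      {pairEquiv τ (τ.symm k)} := by
  ext pr
  simp only [Finset.mem_filter, Finset.mem_univ, true_and, Finset.mem_singleton]
  constructor
  · intro h
    obtain ⟨j, hj⟩ := mem_pairOf.mp pr.2
    rw [hj] at h
    simp only [Finset.mem_insert, Finset.mem_singleton] at h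
    have hk := k.isLt; have hj' := j.isLt
    have htjk : τ j = k := Fin.ext (by omega)
    have hjj : j = τ.symm k := by rw [← htjk, Equiv.symm_apply_apply]
    subst hjj
    exact Subtype.ext hj
  · rintro rfl
    show (n + (k : ℕ)) ∈ ({((τ.symm k : Fin n) : ℕ), n + ((τ (τ.symm k) : Fin n) : ℕ)} : Finset ℕ)
    rw [Equiv.apply_symm_apply]
    simp

lemma pairingIntegral_pairOf (τ : Equiv.Perm (Fin n)) (f g : (Fin n → ℝ) → ℝ) :
    pairingIntegral (pairOf n τ)
      (fun t => f (fun i : Fin n => t (i : ℕ)) * g (fun i : Fin n => t (n + (i : ℕ)))) =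
    ∫ v, f v * g (fun k => v (τ.symm k)) ∂ μn n := by
  have hmp := MeasureTheory.measurePreserving_piCongrLeft
      (fun _ : {pr // pr ∈ pairOf n τ} => mR) (pairEquiv τ)
  rw [pairingIntegral, ← hmp.integral_comp (MeasurableEquiv.measurableEmbedding _)]
  simp only [μn]
  refine integral_congr_ae (Filter.Eventually.of_forall fun v => ?_)
  beta_reduce
  congr 1
  · congr 1
    funext i
    rw [filter_lo, Finset.sum_singleton]
    exact MeasurableEquiv.piCongrLeft_apply_apply (β := fun _ : {pr // pr ∈ pairOf n τ} => ℝ) (pairEquiv τ) v i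
  · congr 1
    funext k
    rw [filter_hi, Finset.sum_singleton]
    exact MeasurableEquiv.piCongrLeft_apply_apply (β := fun _ : {pr // pr ∈ pairOf n τ} => ℝ) (pairEquiv τ) v (τ.symm k)

lemma qInner_integral_eq (σ : Equiv.Perm (Fin n)) (f g : (Fin n → ℝ) → ℝ) :
    (∫ t, f (fun i => t (σ i)) * g (fun i => t i.rev) ∂ μn n) =
      ∫ v, f v * g (fun i => v (σ.symm i.rev)) ∂ μn n := by
  have hmp := MeasureTheory.measurePreserving_piCongrLeft
      (fun _ : Fin n => mR) (σ : Fin n ≃ Fin n)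
  simp only [μn]
  rw [← hmp.integral_comp (MeasurableEquiv.measurableEmbedding _)]
  refine integral_congr_ae (Filter.Eventually.of_forall fun v => ?_)
  beta_reduce
  congr 1
  · congr 1
    funext i
    exact MeasurableEquiv.piCongrLeft_apply_apply (β := fun _ : Fin n => ℝ) (σ : Fin n ≃ Fin n) v i
  · congr 1
    funext i
    have h := MeasurableEquiv.piCongrLeft_apply_apply (β := fun _ : Fin n => ℝ) (σ : Fin n ≃ Fin n) v (σ.symm i.rev)
    rw [Equiv.apply_symm_apply] at h
    exact h

end Aux
/-- For `n ≥ 1`, `q ∈ (-1,1]` and `f, g ∈ L²(ℝ₊ⁿ)`,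
`Σ_{π ∈ C₂(n⊗n)} q^{Cr(π)} ∫_π f ⊗ g = ⟨f, g*⟩_q`. -/
theorem stmt5 (n : ℕ) (hn : 1 ≤ n) (q : ℝ) (hq₁ : -1 < q) (hq₂ : q ≤ 1)
    (f g : (Fin n → ℝ) → ℝ) (hf : MemLp f 2 (μn n)) (hg : MemLp g 2 (μn n)) :
    ∑ π ∈ respPairings 2 (fun _ => n),
      q ^ crNum π * pairingIntegral π
        (fun t => f (fun i : Fin n => t (i : ℕ)) * g (fun i : Fin n => t (n + (i : ℕ)))) =
    qInner n q f (mirror g) := by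
  rw [respPairings_eq, Finset.sum_image (fun a _ b _ h => pairOf_injective h), qInner]
  refine Fintype.sum_equiv (Equiv.mulLeft (Fin.revPerm : Equiv.Perm (Fin n))) _ _ fun τ => ?_
  have hexp : crNum (pairOf n τ)
      = invCount (fun i => (Equiv.mulLeft (Fin.revPerm : Equiv.Perm (Fin n)) τ) i) := by
    rw [crNum_pairOf]
    unfold invCount
    apply congrArg Finset.card
    apply Finset.filter_congr
    intro ij _
    simp only [Equiv.coe_mulLeft, Equiv.Perm.mul_apply, Fin.revPerm_apply, Fin.rev_lt_rev]
  rw [hexp, pairingIntegral_pairOf]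
  congr 1
  simp only [mirror]
  rw [qInner_integral_eq]
  congr 1
  funext v
  congr 1
  apply congrArg g
  funext k
  apply congrArg v
  rw [eq_comm, Equiv.symm_apply_eq]
  simp only [Equiv.coe_mulLeft, Equiv.Perm.mul_apply, Equiv.apply_symm_apply, Fin.revPerm_apply]
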